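/- Let T = ℝᵈ or ℤᵈ, and let {f_t}_{t∈T} ⊂ L^α(S, B_S, μ) be a spectral family generated by a nonsingular flow {φ_t}_{t∈T} with cocycle {c_t}_{t∈T}, i.e., f_t = c_t · w_t^{1/α} · (f₀ ∘ φ_t) μ-a.e. for every t. If r_1, …, r_n : S → [0, 1] are measurable φ-invariant functions (r_k ∘ φ_τ = r_k μ-a.e. for all τ ∈ T) with ∑_{k=1}^n r_k(s)^α = 1 for μ-a.e. s, then each family {r_k f_t}_{t∈T} is stationary and together they form a stationary SαS decomposition of {f_t}_{t∈T}. -/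

import Mathlib

open MeasureTheory

noncomputable section

/-- Two spectral families `{f_t}_{t ∈ T} ⊂ L^α(S, μ)` and `{g_t}_{t ∈ T} ⊂ L^α(V, ν)` are
SαS-equivalent: all α-th absolute power integrals of finite linear combinations agree. -/
def SasEquiv {T S V : Type*} [MeasurableSpace S] [MeasurableSpace V]
    (α : ℝ) (μ : Measure S) (ν : Measure V) (f : T → S → ℝ) (g : T → V → ℝ) : Prop :=
  ∀ (m : ℕ) (a : Fin m → ℝ) (t : Fin m → T),
    ∫ s, |∑ j, a j * f (t j) s| ^ α ∂μ = ∫ v, |∑ j, a j * g (t j) v| ^ α ∂ν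

/-- The families `{g^{(k)}_t}_{t ∈ T} ⊂ L^α(V_k, ν_k)`, `k = 1, …, n`, form an SαS
decomposition of `{f_t}_{t ∈ T} ⊂ L^α(S, μ)`. -/
def SasDecomp {T S : Type*} [MeasurableSpace S] (α : ℝ) (μ : Measure S) (f : T → S → ℝ)
    {n : ℕ} {V : Fin n → Type*} [∀ k, MeasurableSpace (V k)]
    (ν : ∀ k, Measure (V k)) (g : ∀ k, T → V k → ℝ) : Prop :=
  ∀ (m : ℕ) (a : Fin m → ℝ) (t : Fin m → T),
    ∫ s, |∑ j, a j * f (t j) s| ^ α ∂μ = ∑ k, ∫ v, |∑ j, a j * g k (t j) v| ^ α ∂(ν k)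

/-- The family `{f_t}_{t ∈ T}` has full support in `S`: there is no measurable set of
positive measure on which every `f_t` vanishes `μ`-a.e. -/
def FullSupport {T S : Type*} [MeasurableSpace S] (μ : Measure S) (f : T → S → ℝ) : Prop :=
  ∀ A : Set S, MeasurableSet A → (∀ t, ∀ᵐ s ∂μ, s ∈ A → f t s = 0) → μ A = 0

/-- The ratio σ-algebra `ρ(F)` generated by the ratios `f_{t₁}/f_{t₂}` (convention `x/0 = 0`). -/
def ratioSigma {T S : Type*} (f : T → S → ℝ) : MeasurableSpace S :=
  ⨆ (t₁ : T) (t₂ : T), MeasurableSpace.comap (fun s => f t₁ s / f t₂ s) inferInstance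


/-- The family is stationary: each shifted family `{f_{t+τ}}` is SαS-equivalent to `{f_t}`. -/
def StationaryFam {T S : Type*} [Add T] [MeasurableSpace S]
    (α : ℝ) (μ : Measure S) (f : T → S → ℝ) : Prop :=
  ∀ τ : T, SasEquiv α μ μ (fun t => f (t + τ)) f

/-- `φ` is a nonsingular flow on `(S, μ)`: a family of bimeasurable bijections with
`φ_0 = id`, `φ_{t+τ} = φ_t ∘ φ_τ` and `μ(φ_t(A)) = 0 ↔ μ(A) = 0`. -/
def IsNonsingularFlow {T S : Type*} [AddCommGroup T] [MeasurableSpace S]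
    (μ : Measure S) (φ : T → S → S) : Prop :=
  (∀ t, Measurable (φ t)) ∧ φ 0 = id ∧ (∀ t τ, φ (t + τ) = φ t ∘ φ τ) ∧
    ∀ (t : T) (A : Set S), MeasurableSet A → (μ (φ t '' A) = 0 ↔ μ A = 0)

/-- `c` is a `±1`-valued cocycle for the flow `φ`. -/
def IsCocycle {T S : Type*} [AddCommGroup T] [MeasurableSpace S]
    (μ : Measure S) (φ : T → S → S) (c : T → S → ℝ) : Prop :=
  (∀ t, Measurable (c t)) ∧ (∀ t s, c t s = 1 ∨ c t s = -1) ∧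
    ∀ t τ : T, ∀ᵐ s ∂μ, c (t + τ) s = c t s * c τ (φ t s)

/-- `w τ = d(μ∘φ_τ)/dμ`: measurable, a.e. positive, and satisfying the change of
variables formula `∫ g(φ_τ(s)) w_τ(s) μ(ds) = ∫ g dμ` for integrable `g`. -/
def IsFlowRN {T S : Type*} [AddCommGroup T] [MeasurableSpace S]
    (μ : Measure S) (φ : T → S → S) (w : T → S → ℝ) : Prop :=
  (∀ τ, Measurable (w τ)) ∧ (∀ τ, ∀ᵐ s ∂μ, 0 < w τ s) ∧
    ∀ (τ : T) (g : S → ℝ), Integrable g μ →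
      ∫ s, g (φ τ s) * w τ s ∂μ = ∫ s, g s ∂μ

/-- The spectral family `{f_t}` is generated by the flow `φ` with cocycle `c`:
`f_t = c_t ⬝ w_t^{1/α} ⬝ (f₀ ∘ φ_t)` μ-a.e. -/
def FlowGenerated {T S : Type*} [AddCommGroup T] [MeasurableSpace S]
    (α : ℝ) (μ : Measure S) (φ : T → S → S) (c : T → S → ℝ) (w : T → S → ℝ)
    (f : T → S → ℝ) : Prop :=
  ∀ t : T, ∀ᵐ s ∂μ, f t s = c t s * w t s ^ (1 / α) * f 0 (φ t s)

/-- `T` is (an additive group isomorphic to) `ℝᵈ` or `ℤᵈ` for some `d`. -/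
def IsRdOrZd (T : Type*) [AddCommGroup T] : Prop :=
  (∃ d : ℕ, Nonempty (T ≃+ (Fin d → ℝ))) ∨ (∃ d : ℕ, Nonempty (T ≃+ (Fin d → ℤ)))


section AuxFlow

variable {T S : Type*} [AddCommGroup T] [MeasurableSpace S] {μ : Measure S} {φ : T → S → S}

lemma flow_leftInv (hφ : IsNonsingularFlow μ φ) (t : T) (s : S) : φ (-t) (φ t s) = s := by
  have h := hφ.2.2.1 (-t) t
  rw [neg_add_cancel, hφ.2.1] at h
  exact congrFun h.symm s

lemma flow_rightInv (hφ : IsNonsingularFlow μ φ) (t : T) (s : S) : φ t (φ (-t) s) = s := by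
  have h := flow_leftInv hφ (-t) s
  rwa [neg_neg] at h

lemma flow_inj (hφ : IsNonsingularFlow μ φ) (t : T) : Function.Injective (φ t) := by
  intro x y h
  have hx := flow_leftInv hφ t x
  have hy := flow_leftInv hφ t y
  rw [← hx, ← hy, h]

lemma flow_image (hφ : IsNonsingularFlow μ φ) (t : T) (A : Set S) :
    φ t '' A = φ (-t) ⁻¹' A := by
  ext y
  constructor
  · rintro ⟨x, hx, rfl⟩
    simpa [Set.mem_preimage, flow_leftInv hφ t x] using hx
  · intro hy
    exact ⟨φ (-t) y, hy, flow_rightInv hφ t y⟩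

lemma flow_image_meas (hφ : IsNonsingularFlow μ φ) (t : T) {A : Set S}
    (hA : MeasurableSet A) : MeasurableSet (φ t '' A) := by
  rw [flow_image hφ]
  exact hφ.1 (-t) hA

lemma flow_preimage_null (hφ : IsNonsingularFlow μ φ) (t : T) {N : Set S}
    (hN : μ N = 0) : μ (φ t ⁻¹' N) = 0 := by
  have h1 : φ t ⁻¹' N ⊆ φ t ⁻¹' (toMeasurable μ N) :=
    Set.preimage_mono (subset_toMeasurable μ N)
  have h2 : φ t ⁻¹' (toMeasurable μ N) = φ (-t) '' (toMeasurable μ N) := by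
    rw [flow_image hφ (-t), neg_neg]
  have h3 : μ (φ (-t) '' (toMeasurable μ N)) = 0 :=
    (hφ.2.2.2 (-t) _ (measurableSet_toMeasurable μ N)).2
      (by rw [measure_toMeasurable]; exact hN)
  exact measure_mono_null h1 (h2 ▸ h3)

lemma flow_ae (hφ : IsNonsingularFlow μ φ) (t : T) {P : S → Prop}
    (h : ∀ᵐ s ∂μ, P s) : ∀ᵐ s ∂μ, P (φ t s) := by
  rw [ae_iff] at h ⊢
  exact flow_preimage_null hφ t h

lemma indicator_image_comp' {ψ : S → S} (hinj : Function.Injective ψ) (A : Set S)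
    (u v : S → ℝ) (s : S) :
    (ψ '' A).indicator u (ψ s) * v s = A.indicator (fun s => v s * u (ψ s)) s := by
  by_cases hs : s ∈ A
  · rw [Set.indicator_of_mem (Set.mem_image_of_mem _ hs), Set.indicator_of_mem hs, mul_comm]
  · have hns : ψ s ∉ ψ '' A := fun ⟨x, hx, hxe⟩ => hs (hinj hxe ▸ hx)
    rw [Set.indicator_of_notMem hns, Set.indicator_of_notMem hs, zero_mul]

lemma w_setIntegral {w : T → S → ℝ} (hφ : IsNonsingularFlow μ φ) (hw : IsFlowRN μ φ w)
    (t τ : T) {A : Set S} (hA : MeasurableSet A)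
    (hB : μ (φ (t + τ) '' A) ≠ ⊤) (hC : μ (φ τ '' A) ≠ ⊤)
    {M : ℝ} (hM : ∀ s ∈ A, |w t (φ τ s)| ≤ M) :
    ∫ s in A, w (t + τ) s ∂μ = (μ (φ (t + τ) '' A)).toReal ∧
      ∫ s in A, w τ s * w t (φ τ s) ∂μ = (μ (φ (t + τ) '' A)).toReal := by
  have hBmeas : MeasurableSet (φ (t + τ) '' A) := flow_image_meas hφ _ hA
  have hCmeas : MeasurableSet (φ τ '' A) := flow_image_meas hφ _ hA
  have hg : Integrable ((φ (t + τ) '' A).indicator fun _ => (1 : ℝ)) μ := by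
    rw [integrable_indicator_iff hBmeas]
    exact integrableOn_const hB
  have hgval : ∫ s, (φ (t + τ) '' A).indicator (fun _ => (1 : ℝ)) s ∂μ
      = (μ (φ (t + τ) '' A)).toReal := by
    rw [integral_indicator_const (1 : ℝ) hBmeas]; simp; rfl
  constructor
  · have key := hw.2.2 (t + τ) _ hg
    rw [← integral_indicator hA]
    calc ∫ s, A.indicator (w (t + τ)) s ∂μ
        = ∫ s, (φ (t + τ) '' A).indicator (fun _ => (1 : ℝ)) (φ (t + τ) s) * w (t + τ) s ∂μ := by
          refine integral_congr_ae (ae_of_all _ fun s => ?_)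
          show A.indicator (w (t + τ)) s
            = (φ (t + τ) '' A).indicator (fun _ => (1 : ℝ)) (φ (t + τ) s) * w (t + τ) s
          rw [indicator_image_comp' (flow_inj hφ (t + τ)) A _ _ s]
          simp
      _ = ∫ s, (φ (t + τ) '' A).indicator (fun _ => (1 : ℝ)) s ∂μ := key
      _ = (μ (φ (t + τ) '' A)).toReal := hgval
  · have hBC : φ (t + τ) '' A = φ t '' (φ τ '' A) := by
      rw [← Set.image_comp, ← hφ.2.2.1]
    have hh : Integrable ((φ τ '' A).indicator (w t)) μ := by
      rw [integrable_indicator_iff hCmeas]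
      refine Measure.integrableOn_of_bounded (M := M) hC (hw.1 t).aestronglyMeasurable ?_
      refine (ae_restrict_iff' hCmeas).2 (ae_of_all _ ?_)
      rintro x ⟨s, hs, rfl⟩
      simpa [Real.norm_eq_abs] using hM s hs
    have step1 := hw.2.2 τ _ hh
    have step2 := hw.2.2 t _ hg
    rw [← integral_indicator hA]
    calc ∫ s, A.indicator (fun s => w τ s * w t (φ τ s)) s ∂μ
        = ∫ s, (φ τ '' A).indicator (w t) (φ τ s) * w τ s ∂μ :=
          (integral_congr_ae (ae_of_all _ fun s =>
            indicator_image_comp' (flow_inj hφ τ) A _ _ s)).symm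
      _ = ∫ x, (φ τ '' A).indicator (w t) x ∂μ := step1
      _ = ∫ x, (φ (t + τ) '' A).indicator (fun _ => (1 : ℝ)) (φ t x) * w t x ∂μ := by
          refine (integral_congr_ae (ae_of_all _ fun x => ?_)).symm
          show (φ (t + τ) '' A).indicator (fun _ => (1 : ℝ)) (φ t x) * w t x
            = (φ τ '' A).indicator (w t) x
          rw [hBC, indicator_image_comp' (flow_inj hφ t) _ _ _ x]
          simp
      _ = ∫ s, (φ (t + τ) '' A).indicator (fun _ => (1 : ℝ)) s ∂μ := step2
      _ = (μ (φ (t + τ) '' A)).toReal := hgval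

lemma null_of_setIntegral_eq {A : Set S} (hA : MeasurableSet A) {u v : S → ℝ}
    (hu : IntegrableOn u A μ) (hv : IntegrableOn v A μ)
    (heq : ∫ s in A, u s ∂μ = ∫ s in A, v s ∂μ)
    (hlt : ∀ s ∈ A, v s < u s) : μ A = 0 := by
  have h0 : ∫ s in A, (u s - v s) ∂μ = 0 := by
    rw [integral_sub hu hv, heq, sub_self]
  have hnn : 0 ≤ᵐ[μ.restrict A] fun s => u s - v s :=
    (ae_restrict_iff' hA).2 (ae_of_all _ fun s hs => sub_nonneg.2 (hlt s hs).le)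
  have hz : ∀ᵐ s ∂μ.restrict A, u s - v s = 0 :=
    (integral_eq_zero_iff_of_nonneg_ae hnn (hu.sub hv)).1 h0
  have hAsub : A ⊆ {s | ¬ (u s - v s = 0)} := fun s hs => sub_ne_zero.2 (hlt s hs).ne'
  refine le_antisymm ?_ zero_le
  calc μ A = μ.restrict A A := (Measure.restrict_apply_self μ A).symm
    _ ≤ μ.restrict A {s | ¬ (u s - v s = 0)} := measure_mono hAsub
    _ = 0 := ae_iff.1 hz

lemma chainW {w : T → S → ℝ} [SigmaFinite μ] (hφ : IsNonsingularFlow μ φ)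
    (hw : IsFlowRN μ φ w) (t τ : T) :
    ∀ᵐ s ∂μ, w (t + τ) s = w τ s * w t (φ τ s) := by
  set u : S → ℝ := w (t + τ) with hu
  set v : S → ℝ := fun s => w τ s * w t (φ τ s) with hv
  have humeas : Measurable u := hw.1 _
  have hvmeas : Measurable v := (hw.1 τ).mul ((hw.1 t).comp (hφ.1 τ))
  set K : ℕ → Set S := fun n =>
    spanningSets μ n ∩ φ (t + τ) ⁻¹' spanningSets μ n ∩ φ τ ⁻¹' spanningSets μ n ∩
      {s | |w τ s| ≤ (n : ℝ)} ∩ {s | |w t (φ τ s)| ≤ (n : ℝ)} ∩ {s | |u s| ≤ (n : ℝ)} with hK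
  have hKmeas : ∀ n, MeasurableSet (K n) := by
    intro n
    exact (((((measurableSet_spanningSets μ n).inter
      (hφ.1 (t + τ) (measurableSet_spanningSets μ n))).inter
      (hφ.1 τ (measurableSet_spanningSets μ n))).inter
      (measurableSet_le (hw.1 τ).abs measurable_const)).inter
      (measurableSet_le ((hw.1 t).comp (hφ.1 τ)).abs measurable_const)).inter
      (measurableSet_le humeas.abs measurable_const)
  have hKcover : ∀ s : S, ∃ n, s ∈ K n := by
    intro s
    have hmem : ∀ x : S, ∃ n, x ∈ spanningSets μ n := fun x =>
      Set.mem_iUnion.1 (by rw [iUnion_spanningSets]; trivial)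
    obtain ⟨n₁, hn₁⟩ := hmem s
    obtain ⟨n₂, hn₂⟩ := hmem (φ (t + τ) s)
    obtain ⟨n₃, hn₃⟩ := hmem (φ τ s)
    refine ⟨n₁ + n₂ + n₃ + ⌈|w τ s|⌉₊ + ⌈|w t (φ τ s)|⌉₊ + ⌈|u s|⌉₊,
      ⟨⟨⟨⟨⟨?_, ?_⟩, ?_⟩, ?_⟩, ?_⟩, ?_⟩⟩
    · exact monotone_spanningSets μ (by omega) hn₁
    · exact monotone_spanningSets μ (by omega) hn₂
    · exact monotone_spanningSets μ (by omega) hn₃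
    · exact (Nat.le_ceil |w τ s|).trans (Nat.cast_le.2 (by omega))
    · exact (Nat.le_ceil |w t (φ τ s)|).trans (Nat.cast_le.2 (by omega))
    · exact (Nat.le_ceil |u s|).trans (Nat.cast_le.2 (by omega))
  have hAint : ∀ (n : ℕ) (E : Set S), MeasurableSet E →
      (∫ s in E ∩ K n, u s ∂μ = ∫ s in E ∩ K n, v s ∂μ) ∧
        IntegrableOn u (E ∩ K n) μ ∧ IntegrableOn v (E ∩ K n) μ := by
    intro n E hE
    have hAmeas : MeasurableSet (E ∩ K n) := hE.inter (hKmeas n)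
    have hAfin : μ (E ∩ K n) ≠ ⊤ :=
      ((measure_mono fun s hs => hs.2.1.1.1.1.1).trans_lt
        (measure_spanningSets_lt_top μ n)).ne
    have hBfin : μ (φ (t + τ) '' (E ∩ K n)) ≠ ⊤ :=
      ((measure_mono (Set.image_subset_iff.2 fun s hs => hs.2.1.1.1.1.2)).trans_lt
        (measure_spanningSets_lt_top μ n)).ne
    have hCfin : μ (φ τ '' (E ∩ K n)) ≠ ⊤ :=
      ((measure_mono (Set.image_subset_iff.2 fun s hs => hs.2.1.1.1.2)).trans_lt
        (measure_spanningSets_lt_top μ n)).ne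
    have hM : ∀ s ∈ E ∩ K n, |w t (φ τ s)| ≤ (n : ℝ) := fun s hs => hs.2.1.2
    obtain ⟨e1, e2⟩ := w_setIntegral hφ hw t τ hAmeas hBfin hCfin hM
    refine ⟨e1.trans e2.symm, ?_, ?_⟩
    · refine Measure.integrableOn_of_bounded (M := (n : ℝ)) hAfin humeas.aestronglyMeasurable
        ((ae_restrict_iff' hAmeas).2 (ae_of_all _ fun s hs => ?_))
      simpa [Real.norm_eq_abs] using hs.2.2
    · refine Measure.integrableOn_of_bounded (M := (n : ℝ) * n) hAfin hvmeas.aestronglyMeasurable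
        ((ae_restrict_iff' hAmeas).2 (ae_of_all _ fun s hs => ?_))
      rw [Real.norm_eq_abs, hv]
      calc |w τ s * w t (φ τ s)| = |w τ s| * |w t (φ τ s)| := abs_mul _ _
        _ ≤ (n : ℝ) * (n : ℝ) :=
          mul_le_mul hs.2.1.1.2 hs.2.1.2 (abs_nonneg _) (Nat.cast_nonneg n)
  have h1 : μ {s | v s < u s} = 0 := by
    have hnull : ∀ n, μ ({s | v s < u s} ∩ K n) = 0 := by
      intro n
      obtain ⟨heq, hiu, hiv⟩ := hAint n _ (measurableSet_lt hvmeas humeas)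
      exact null_of_setIntegral_eq ((measurableSet_lt hvmeas humeas).inter (hKmeas n))
        hiu hiv heq fun s hs => hs.1
    refine measure_mono_null (fun s hs => ?_) (measure_iUnion_null hnull)
    obtain ⟨n, hn⟩ := hKcover s
    exact Set.mem_iUnion.2 ⟨n, hs, hn⟩
  have h2 : μ {s | u s < v s} = 0 := by
    have hnull : ∀ n, μ ({s | u s < v s} ∩ K n) = 0 := by
      intro n
      obtain ⟨heq, hiu, hiv⟩ := hAint n _ (measurableSet_lt humeas hvmeas)
      exact null_of_setIntegral_eq ((measurableSet_lt humeas hvmeas).inter (hKmeas n))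
        hiv hiu heq.symm fun s hs => hs.1
    refine measure_mono_null (fun s hs => ?_) (measure_iUnion_null hnull)
    obtain ⟨n, hn⟩ := hKcover s
    exact Set.mem_iUnion.2 ⟨n, hs, hn⟩
  refine ae_iff.2 (measure_mono_null (fun s hs => ?_) (measure_union_null h1 h2))
  rcases lt_or_gt_of_ne (hs : ¬ u s = v s) with h | h
  · exact Or.inr h
  · exact Or.inl h

lemma keyRel [SigmaFinite μ] {α : ℝ} {c w f : T → S → ℝ}
    (hφ : IsNonsingularFlow μ φ) (hc : IsCocycle μ φ c) (hw : IsFlowRN μ φ w)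
    (hgen : FlowGenerated α μ φ c w f) (t τ : T) :
    ∀ᵐ s ∂μ, f (t + τ) s = c τ s * w τ s ^ (1 / α) * f t (φ τ s) := by
  filter_upwards [hgen (t + τ), flow_ae hφ τ (hgen t), hc.2.2 τ t, chainW hφ hw t τ,
    hw.2.1 τ, flow_ae hφ τ (hw.2.1 t)] with s e1 e2 e3 e4 e5 e6
  have ec : c (t + τ) s = c τ s * c t (φ τ s) := by rw [add_comm t τ]; exact e3
  have eφ : φ (t + τ) s = φ t (φ τ s) := congrFun (hφ.2.2.1 t τ) s
  calc f (t + τ) s = c (t + τ) s * w (t + τ) s ^ (1 / α) * f 0 (φ (t + τ) s) := e1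
    _ = c τ s * w τ s ^ (1 / α) *
        (c t (φ τ s) * w t (φ τ s) ^ (1 / α) * f 0 (φ t (φ τ s))) := by
        rw [ec, e4, Real.mul_rpow e5.le e6.le, eφ]; ring
    _ = c τ s * w τ s ^ (1 / α) * f t (φ τ s) := by rw [← e2]

end AuxFlow

lemma sum_rpow_le {α : ℝ} (hα : 0 < α) {m : ℕ} (y : Fin m → ℝ) (hy : ∀ j, 0 ≤ y j) :
    (∑ j, y j) ^ α ≤ ∑ j, ((m : ℝ) * y j) ^ α := by
  rcases Nat.eq_zero_or_pos m with hm | hm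
  · subst hm; simp [Real.zero_rpow hα.ne']
  · obtain ⟨j0, -, hj0⟩ := Finset.univ.exists_max_image y ⟨⟨0, hm⟩, Finset.mem_univ _⟩
    have h1 : ∑ j, y j ≤ (m : ℝ) * y j0 := by
      calc ∑ j, y j ≤ ∑ _j : Fin m, y j0 :=
            Finset.sum_le_sum fun j _ => hj0 j (Finset.mem_univ j)
        _ = (m : ℝ) * y j0 := by
            rw [Finset.sum_const, Finset.card_univ, Fintype.card_fin, nsmul_eq_mul]
    have h2 : (∑ j, y j) ^ α ≤ ((m : ℝ) * y j0) ^ α :=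
      Real.rpow_le_rpow (Finset.sum_nonneg fun j _ => hy j) h1 hα.le
    exact h2.trans (Finset.single_le_sum (f := fun j => ((m : ℝ) * y j) ^ α)
      (fun j _ => Real.rpow_nonneg (mul_nonneg (Nat.cast_nonneg m) (hy j)) α)
      (Finset.mem_univ j0))

lemma integrable_comb {S : Type*} [MeasurableSpace S] {μ : Measure S} {α : ℝ} (hα : 0 < α)
    {ι : Type*} (f : ι → S → ℝ) (hf_meas : ∀ t, Measurable (f t))
    (hf_int : ∀ t, Integrable (fun s => |f t s| ^ α) μ)
    (m : ℕ) (a : Fin m → ℝ) (t : Fin m → ι) :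
    Integrable (fun s => |∑ j, a j * f (t j) s| ^ α) μ := by
  have hmeas : Measurable fun s => |∑ j, a j * f (t j) s| ^ α :=
    (Real.continuous_rpow_const hα.le).measurable.comp
      (Finset.measurable_sum Finset.univ fun j _ => (hf_meas (t j)).const_mul (a j)).abs
  have hg : Integrable (fun s => ∑ j, ((m : ℝ) * |a j|) ^ α * |f (t j) s| ^ α) μ :=
    integrable_finset_sum _ fun j _ => (hf_int (t j)).const_mul _
  refine hg.mono' hmeas.aestronglyMeasurable (ae_of_all _ fun s => ?_)
  rw [Real.norm_eq_abs, abs_of_nonneg (Real.rpow_nonneg (abs_nonneg _) _)]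
  calc |∑ j, a j * f (t j) s| ^ α ≤ (∑ j, |a j * f (t j) s|) ^ α :=
      Real.rpow_le_rpow (abs_nonneg _) (Finset.abs_sum_le_sum_abs _ _) hα.le
    _ ≤ ∑ j, ((m : ℝ) * |a j * f (t j) s|) ^ α :=
      sum_rpow_le hα _ fun j => abs_nonneg _
    _ = ∑ j, ((m : ℝ) * |a j|) ^ α * |f (t j) s| ^ α := by
      refine Finset.sum_congr rfl fun j _ => ?_
      rw [abs_mul, ← mul_assoc,
        Real.mul_rpow (mul_nonneg (Nat.cast_nonneg m) (abs_nonneg _)) (abs_nonneg _)]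

/-- Theorem 3.2 (ii): flow-invariant weights with `∑ r_k^α = 1` a.e. produce a
stationary SαS decomposition of a flow-generated stationary SαS process. -/
theorem invariant_weights_give_stationary_decomposition
    {T S : Type*} [AddCommGroup T] [MeasurableSpace S] [StandardBorelSpace S]
    (μ : Measure S) [SigmaFinite μ]
    (α : ℝ) (hα0 : 0 < α) (hα2 : α < 2) (hT : IsRdOrZd T)
    (φ : T → S → S) (c : T → S → ℝ) (w : T → S → ℝ)
    (hφ : IsNonsingularFlow μ φ) (hc : IsCocycle μ φ c) (hw : IsFlowRN μ φ w)
    (f : T → S → ℝ) (hf_meas : ∀ t, Measurable (f t))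
    (hf_int : ∀ t, Integrable (fun s => |f t s| ^ α) μ)
    (hgen : FlowGenerated α μ φ c w f)
    (n : ℕ) (r : Fin n → S → ℝ) (hr_meas : ∀ k, Measurable (r k))
    (hr_range : ∀ k s, r k s ∈ Set.Icc (0 : ℝ) 1)
    (hr_inv : ∀ (k : Fin n) (τ : T), (fun s => r k (φ τ s)) =ᵐ[μ] r k)
    (hr_sum : ∀ᵐ s ∂μ, ∑ k, r k s ^ α = 1) :
    (∀ k, StationaryFam α μ (fun t s => r k s * f t s)) ∧
    SasDecomp α μ f (fun _ : Fin n => μ) (fun k t s => r k s * f t s) := by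
  have hsum_eq : ∀ (k : Fin n) (m : ℕ) (a : Fin m → ℝ) (t : Fin m → T) (s : S),
      ∑ j, a j * (r k s * f (t j) s) = r k s * ∑ j, a j * f (t j) s := by
    intro k m a t s
    rw [Finset.mul_sum]
    exact Finset.sum_congr rfl fun j _ => by ring
  have hrmeas : ∀ (k : Fin n) (m : ℕ) (a : Fin m → ℝ) (t : Fin m → T),
      Measurable fun s => |∑ j, a j * (r k s * f (t j) s)| ^ α := fun k m a t =>
    (Real.continuous_rpow_const hα0.le).measurable.comp
      (Finset.measurable_sum Finset.univ fun j _ =>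
        ((hr_meas k).mul (hf_meas (t j))).const_mul (a j)).abs
  have hGint : ∀ (k : Fin n) (m : ℕ) (a : Fin m → ℝ) (t : Fin m → T),
      Integrable (fun s => |∑ j, a j * (r k s * f (t j) s)| ^ α) μ := by
    intro k m a t
    refine (integrable_comb hα0 f hf_meas hf_int m a t).mono'
      (hrmeas k m a t).aestronglyMeasurable (ae_of_all _ fun s => ?_)
    rw [Real.norm_eq_abs, abs_of_nonneg (Real.rpow_nonneg (abs_nonneg _) _),
      hsum_eq k m a t s]
    refine Real.rpow_le_rpow (abs_nonneg _) ?_ hα0.le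
    rw [abs_mul, abs_of_nonneg (hr_range k s).1]
    exact mul_le_of_le_one_left (abs_nonneg _) (hr_range k s).2
  constructor
  · intro k τ m a t
    show ∫ s, |∑ j, a j * (r k s * f (t j + τ) s)| ^ α ∂μ
      = ∫ s, |∑ j, a j * (r k s * f (t j) s)| ^ α ∂μ
    have hkey : ∀ᵐ s ∂μ, ∀ j : Fin m,
        f (t j + τ) s = c τ s * w τ s ^ (1 / α) * f (t j) (φ τ s) :=
      ae_all_iff.2 fun j => keyRel hφ hc hw hgen (t j) τ
    have hae : (fun s => |∑ j, a j * (r k s * f (t j + τ) s)| ^ α)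
        =ᵐ[μ] fun s => |∑ j, a j * (r k (φ τ s) * f (t j) (φ τ s))| ^ α * w τ s := by
      filter_upwards [hkey, hw.2.1 τ, hr_inv k τ] with s h1 h2 h3
      have hsum : ∑ j, a j * (r k s * f (t j + τ) s)
          = c τ s * w τ s ^ (1 / α) * ∑ j, a j * (r k (φ τ s) * f (t j) (φ τ s)) := by
        rw [Finset.mul_sum]
        refine Finset.sum_congr rfl fun j _ => ?_
        rw [h1 j, h3]; ring
      have hc1 : |c τ s| = 1 := by rcases hc.2.1 τ s with h | h <;> simp [h]
      rw [hsum, abs_mul, abs_mul, hc1, one_mul,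
        abs_of_nonneg (Real.rpow_nonneg h2.le _),
        Real.mul_rpow (Real.rpow_nonneg h2.le _) (abs_nonneg _),
        ← Real.rpow_mul h2.le, one_div_mul_cancel (ne_of_gt hα0), Real.rpow_one, mul_comm]
    rw [integral_congr_ae hae]
    exact hw.2.2 τ (fun x => |∑ j, a j * (r k x * f (t j) x)| ^ α) (hGint k m a t)
  · intro m a t
    show ∫ s, |∑ j, a j * f (t j) s| ^ α ∂μ
      = ∑ k, ∫ s, |∑ j, a j * (r k s * f (t j) s)| ^ α ∂μ
    have h1 : ∀ (k : Fin n) (s : S), |∑ j, a j * (r k s * f (t j) s)| ^ α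
        = r k s ^ α * |∑ j, a j * f (t j) s| ^ α := by
      intro k s
      rw [hsum_eq k m a t s, abs_mul, abs_of_nonneg (hr_range k s).1,
        Real.mul_rpow (hr_range k s).1 (abs_nonneg _)]
    calc ∫ s, |∑ j, a j * f (t j) s| ^ α ∂μ
        = ∫ s, ∑ k, r k s ^ α * |∑ j, a j * f (t j) s| ^ α ∂μ := by
          refine integral_congr_ae ?_
          filter_upwards [hr_sum] with s hs
          rw [← Finset.sum_mul, hs, one_mul]
      _ = ∑ k, ∫ s, r k s ^ α * |∑ j, a j * f (t j) s| ^ α ∂μ := by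
          refine integral_finset_sum _ fun k _ => ?_
          have heq : (fun s => |∑ j, a j * (r k s * f (t j) s)| ^ α)
              = fun s => r k s ^ α * |∑ j, a j * f (t j) s| ^ α := funext (h1 k)
          exact heq ▸ hGint k m a t
      _ = ∑ k, ∫ s, |∑ j, a j * (r k s * f (t j) s)| ^ α ∂μ :=
          Finset.sum_congr rfl fun k _ =>
            integral_congr_ae (ae_of_all _ fun s => (h1 k s).symm)
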